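/- arXiv:1405.5605 — 2 statements merged into one kernel-verified Lean document; each statement's English description precedes it below -/
import Mathlib

section
/- The Thue–Morse autocorrelation σ satisfies σ(0) = 1, σ(1) = -1/3, and for all n ∈ ℕ, σ(2n) = σ(n) and σ(2n+1) = -(σ(n) + σ(n+1))/2. -/
/-- The Thue–Morse sequence: parity of the number of 1s in binary representation. -/
def t (n : ℕ) : ℕ := (Nat.digits 2 n).count 1 % 2

noncomputable def s (n : ℕ) : ℝ := (-1 : ℝ) ^ (t n)

lemma pow_t_add (a b : ℕ) : (-1 : ℝ) ^ (t a + t b) = s a * s b := by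
  rw [pow_add]; rfl

lemma t_double (n : ℕ) : t (2 * n) = t n := by
  rcases Nat.eq_zero_or_pos n with h | h
  · simp [h]
  · unfold t
    rw [Nat.digits_def' (by norm_num : 1 < 2) (by omega : 0 < 2 * n)]
    simp [Nat.mul_div_cancel_left, Nat.mul_mod_right]

lemma t_double_succ (n : ℕ) : t (2 * n + 1) = (t n + 1) % 2 := by
  unfold t
  rw [Nat.digits_def' (by norm_num : 1 < 2) (by omega : 0 < 2 * n + 1)]
  have h1 : (2 * n + 1) % 2 = 1 := by omega
  have h2 : (2 * n + 1) / 2 = n := by omega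
  rw [h1, h2, List.count_cons]
  simp [Nat.add_mod]

lemma s_double (n : ℕ) : s (2 * n) = s n := by
  unfold s; rw [t_double]

lemma s_double_succ (n : ℕ) : s (2 * n + 1) = -s n := by
  unfold s
  rw [t_double_succ]
  have : t n = 0 ∨ t n = 1 := by
    have := Nat.mod_two_eq_zero_or_one ((Nat.digits 2 n).count 1)
    unfold t; omega
  rcases this with h | h <;> rw [h] <;> norm_num

lemma step_even (j k : ℕ) :
    (-1 : ℝ) ^ (t (2 * j) + t (2 * j + 2 * k)) +
      (-1 : ℝ) ^ (t (2 * j + 1) + t (2 * j + 1 + 2 * k)) =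
    2 * (-1 : ℝ) ^ (t j + t (j + k)) := by
  have h1 : 2 * j + 2 * k = 2 * (j + k) := by ring
  have h2 : 2 * j + 1 + 2 * k = 2 * (j + k) + 1 := by ring
  rw [pow_t_add, pow_t_add, pow_t_add, h1, h2, s_double, s_double, s_double_succ,
    s_double_succ]
  ring

lemma step_odd (j k : ℕ) :
    (-1 : ℝ) ^ (t (2 * j) + t (2 * j + (2 * k + 1))) +
      (-1 : ℝ) ^ (t (2 * j + 1) + t (2 * j + 1 + (2 * k + 1))) =
    -((-1 : ℝ) ^ (t j + t (j + k)) + (-1 : ℝ) ^ (t j + t (j + (k + 1)))) := by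
  have h1 : 2 * j + (2 * k + 1) = 2 * (j + k) + 1 := by ring
  have h2 : 2 * j + 1 + (2 * k + 1) = 2 * (j + (k + 1)) := by ring
  rw [pow_t_add, pow_t_add, pow_t_add, pow_t_add, h1, h2, s_double, s_double,
    s_double_succ, s_double_succ]
  ring

lemma sum_split (g : ℕ → ℝ) (N : ℕ) :
    ∑ i ∈ Finset.range (2 * N), g i = ∑ j ∈ Finset.range N, (g (2 * j) + g (2 * j + 1)) := by
  induction N with
  | zero => simp
  | succ n ih =>
    rw [Finset.sum_range_succ, ← ih, Nat.mul_succ, Finset.sum_range_succ,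
      Finset.sum_range_succ]
    ring

lemma hdouble : Filter.Tendsto (fun N : ℕ => 2 * N) Filter.atTop Filter.atTop :=
  Filter.tendsto_atTop_atTop.mpr fun b => ⟨b, fun a ha => by omega⟩

theorem thue_morse_autocorrelation_recurrence (σ : ℕ → ℝ)
    (hσ : ∀ k : ℕ, Filter.Tendsto
      (fun N : ℕ => (1 / (N : ℝ)) * ∑ i ∈ Finset.range N, (-1 : ℝ) ^ (t i + t (i + k)))
      Filter.atTop (nhds (σ k))) :
    σ 0 = 1 ∧ σ 1 = -1/3 ∧
      (∀ n : ℕ, σ (2 * n) = σ n) ∧ (∀ n : ℕ, σ (2 * n + 1) = -(σ n + σ (n + 1)) / 2) := by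
  -- σ (2n) = σ n
  have heven : ∀ n : ℕ, σ (2 * n) = σ n := by
    intro k
    have h1 := (hσ (2 * k)).comp hdouble
    have h2 : ((fun N : ℕ => (1 / (N : ℝ)) *
        ∑ i ∈ Finset.range N, (-1 : ℝ) ^ (t i + t (i + 2 * k))) ∘ (fun N => 2 * N)) =
        fun N : ℕ => (1 / (N : ℝ)) * ∑ i ∈ Finset.range N, (-1 : ℝ) ^ (t i + t (i + k)) := by
      funext N
      simp only [Function.comp]
      rw [sum_split]
      have hs : ∑ j ∈ Finset.range N,
          ((-1 : ℝ) ^ (t (2 * j) + t (2 * j + 2 * k)) +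
            (-1 : ℝ) ^ (t (2 * j + 1) + t (2 * j + 1 + 2 * k))) =
          2 * ∑ j ∈ Finset.range N, (-1 : ℝ) ^ (t j + t (j + k)) := by
        rw [Finset.mul_sum]
        exact Finset.sum_congr rfl fun j _ => step_even j k
      rw [hs]
      push_cast
      rcases eq_or_ne (N : ℝ) 0 with h | h
      · simp [h]
      · field_simp
    rw [h2] at h1
    exact tendsto_nhds_unique h1 (hσ k)
  -- σ (2n+1) = -(σ n + σ (n+1))/2
  have hodd : ∀ n : ℕ, σ (2 * n + 1) = -(σ n + σ (n + 1)) / 2 := by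
    intro k
    have h1 := (hσ (2 * k + 1)).comp hdouble
    have h2 : ((fun N : ℕ => (1 / (N : ℝ)) *
        ∑ i ∈ Finset.range N, (-1 : ℝ) ^ (t i + t (i + (2 * k + 1)))) ∘ (fun N => 2 * N)) =
        fun N : ℕ => -((1 / (N : ℝ)) * ∑ i ∈ Finset.range N, (-1 : ℝ) ^ (t i + t (i + k)) +
          (1 / (N : ℝ)) * ∑ i ∈ Finset.range N, (-1 : ℝ) ^ (t i + t (i + (k + 1)))) / 2 := by
      funext N
      simp only [Function.comp]
      rw [sum_split]
      have hs : ∑ j ∈ Finset.range N,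
          ((-1 : ℝ) ^ (t (2 * j) + t (2 * j + (2 * k + 1))) +
            (-1 : ℝ) ^ (t (2 * j + 1) + t (2 * j + 1 + (2 * k + 1)))) =
          -(∑ j ∈ Finset.range N, (-1 : ℝ) ^ (t j + t (j + k)) +
            ∑ j ∈ Finset.range N, (-1 : ℝ) ^ (t j + t (j + (k + 1)))) := by
        rw [neg_add, ← Finset.sum_neg_distrib, ← Finset.sum_neg_distrib,
          ← Finset.sum_add_distrib]
        exact Finset.sum_congr rfl fun j _ => by rw [step_odd]; ring
      rw [hs]
      push_cast
      rcases eq_or_ne (N : ℝ) 0 with h | h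
      · simp [h]
      · have h2N : (2 : ℝ) * N ≠ 0 := by simpa using h
        field_simp
    rw [h2] at h1
    have h3 : Filter.Tendsto
        (fun N : ℕ => -((1 / (N : ℝ)) * ∑ i ∈ Finset.range N, (-1 : ℝ) ^ (t i + t (i + k)) +
          (1 / (N : ℝ)) * ∑ i ∈ Finset.range N, (-1 : ℝ) ^ (t i + t (i + (k + 1)))) / 2)
        Filter.atTop (nhds (-(σ k + σ (k + 1)) / 2)) :=
      (((hσ k).add (hσ (k + 1))).neg).div_const 2
    exact tendsto_nhds_unique h1 h3
  -- σ 0 = 1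
  have h0 : σ 0 = 1 := by
    have heq : (fun N : ℕ => (1 / (N : ℝ)) *
        ∑ i ∈ Finset.range N, (-1 : ℝ) ^ (t i + t (i + 0))) =ᶠ[Filter.atTop]
        fun _ => (1 : ℝ) := by
      filter_upwards [Filter.eventually_ge_atTop 1] with N hN
      have hs : ∑ i ∈ Finset.range N, (-1 : ℝ) ^ (t i + t (i + 0)) = N := by
        have hterm : ∀ i : ℕ, (-1 : ℝ) ^ (t i + t (i + 0)) = 1 := fun i => by
          rw [Nat.add_zero]
          exact Even.neg_one_pow ⟨t i, by ring⟩
        simp [hterm]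
      have hN' : (N : ℝ) ≠ 0 := Nat.cast_ne_zero.mpr (by omega)
      rw [hs, one_div_mul_cancel hN']
    exact tendsto_nhds_unique ((hσ 0).congr' heq) tendsto_const_nhds
  refine ⟨h0, ?_, heven, hodd⟩
  have := hodd 0
  simp only [Nat.mul_zero, Nat.zero_add, h0] at this
  linarith
end

section
/- For all n ∈ ℕ and all i with 1 ≤ i ≤ 2^n - 1, the similarity density SD(t_n, t_{n+1}[i .. 2^n + i - 1]) equals 1/2 if i = 2^{n-1}, and lies in [1/4, 3/4] otherwise. -/
def mu (l : List ℕ) : List ℕ := l.flatMap (fun b => [b, 1 - b])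
def tWord (n : ℕ) : List ℕ := mu^[n] [0]

/-- Similarity density of two finite words (of the same length). -/
noncomputable def SD (x y : List ℕ) : ℝ :=
  (List.zipWith (fun a b => if a = b then (1 : ℝ) else 0) x y).sum / x.length

def T (n : ℕ) : ℕ := (Nat.digits 2 n).sum % 2
lemma T_le_one (n : ℕ) : T n ≤ 1 := Nat.lt_succ_iff.mp (Nat.mod_lt _ two_pos)
lemma T_zero : T 0 = 0 := by simp [T]
lemma T_two_mul (k : ℕ) : T (2 * k) = T k := by
  rcases Nat.eq_zero_or_pos k with h | h
  · simp [h]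
  · unfold T
    rw [Nat.digits_def' (by norm_num : 2 ≤ 2) (by positivity)]
    simp [Nat.mul_div_cancel_left, Nat.mul_mod_right]
lemma T_two_mul_add_one (k : ℕ) : T (2 * k + 1) = 1 - T k := by
  unfold T
  rw [Nat.digits_def' (by norm_num : 2 ≤ 2) (by omega)]
  have h1 : (2 * k + 1) % 2 = 1 := by omega
  have h2 : (2 * k + 1) / 2 = k := by omega
  rw [h1, h2]
  simp only [List.sum_cons]
  omega

lemma T_pow_add : ∀ n j, j < 2 ^ n → T (2 ^ n + j) = 1 - T j := by
  intro n
  induction n with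
  | zero =>
    intro j hj
    interval_cases j
    rw [show 2 ^ 0 + 0 = 2 * 0 + 1 by ring, T_two_mul_add_one, T_zero]
  | succ n ih =>
    intro j hj
    rcases Nat.even_or_odd j with ⟨k, hk⟩ | ⟨k, hk⟩
    · subst hk
      have hk2 : k < 2 ^ n := by rw [pow_succ] at hj; omega
      rw [show 2 ^ (n+1) + (k + k) = 2 * (2 ^ n + k) by ring, T_two_mul,
        ih k hk2, show k + k = 2 * k by ring, T_two_mul]
    · subst hk
      have hk2 : k < 2 ^ n := by rw [pow_succ] at hj; omega
      rw [show 2 ^ (n+1) + (2 * k + 1) = 2 * (2 ^ n + k) + 1 by ring,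
        T_two_mul_add_one, ih k hk2, T_two_mul_add_one]

def eTM (n : ℕ) : ℤ := 1 - 2 * T n

lemma eTM_two_mul (k : ℕ) : eTM (2 * k) = eTM k := by unfold eTM; rw [T_two_mul]

lemma eTM_two_mul_add_one (k : ℕ) : eTM (2 * k + 1) = - eTM k := by
  unfold eTM
  rw [T_two_mul_add_one, Nat.cast_sub (T_le_one k)]
  push_cast; ring

lemma eTM_sq (n : ℕ) : eTM n * eTM n = 1 := by
  rcases Nat.le_one_iff_eq_zero_or_eq_one.mp (T_le_one n) with h | h <;>
    simp [eTM, h]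

lemma eTM_pow_add (n j : ℕ) (hj : j < 2 ^ n) : eTM (2 ^ n + j) = - eTM j := by
  unfold eTM
  rw [T_pow_add n j hj, Nat.cast_sub (T_le_one j)]
  push_cast; ring

noncomputable section
def S (n i : ℕ) : ℤ := ∑ j ∈ Finset.range (2 ^ n), eTM j * eTM (i + j)

lemma sum_range_two_mul (f : ℕ → ℤ) (m : ℕ) :
    ∑ j ∈ Finset.range (2 * m), f j = ∑ k ∈ Finset.range m, (f (2 * k) + f (2 * k + 1)) := by
  induction m with
  | zero => simp
  | succ m ih =>
    rw [show 2 * (m + 1) = 2 * m + 1 + 1 by ring, Finset.sum_range_succ,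
      Finset.sum_range_succ, ih, Finset.sum_range_succ]
    ring

lemma S_even (n i : ℕ) : S (n + 1) (2 * i) = 2 * S n i := by
  unfold S
  rw [pow_succ, mul_comm (2 ^ n) 2, sum_range_two_mul, Finset.mul_sum]
  refine Finset.sum_congr rfl fun k _ => ?_
  rw [show 2 * i + 2 * k = 2 * (i + k) by ring,
    show 2 * i + (2 * k + 1) = 2 * (i + k) + 1 by ring,
    eTM_two_mul, eTM_two_mul, eTM_two_mul_add_one, eTM_two_mul_add_one]
  ring

lemma S_odd (n i : ℕ) : S (n + 1) (2 * i + 1) = -(S n i + S n (i + 1)) := by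
  unfold S
  rw [pow_succ, mul_comm (2 ^ n) 2, sum_range_two_mul, neg_add, ← Finset.sum_neg_distrib,
    ← Finset.sum_neg_distrib, ← Finset.sum_add_distrib]
  refine Finset.sum_congr rfl fun k _ => ?_
  rw [show 2 * i + 1 + 2 * k = 2 * (i + k) + 1 by ring,
    show 2 * i + 1 + (2 * k + 1) = 2 * (i + 1 + k) by ring,
    eTM_two_mul, eTM_two_mul, eTM_two_mul_add_one, eTM_two_mul_add_one]
  ring

lemma S_zero (n : ℕ) : S n 0 = 2 ^ n := by
  unfold S
  rw [Finset.sum_congr rfl fun j _ => by rw [Nat.zero_add, eTM_sq]]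
  simp

lemma S_top (n : ℕ) : S n (2 ^ n) = -(2 ^ n) := by
  unfold S
  rw [Finset.sum_congr rfl fun j hj => by
    rw [eTM_pow_add n j (Finset.mem_range.mp hj)]]
  have : ∀ j ∈ Finset.range (2 ^ n), eTM j * -eTM j = -1 := fun j _ => by
    rw [← neg_mul_comm, neg_mul, eTM_sq]
  rw [Finset.sum_congr rfl this]
  simp


lemma eTM_def (n : ℕ) : eTM n = 1 - 2 * T n := rfl

lemma eTM_zero : eTM 0 = 1 := by simp [eTM, T_zero]

lemma eTM_one : eTM 1 = -1 := by
  have := eTM_two_mul_add_one 0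
  rw [mul_zero, zero_add, eTM_zero] at this
  exact this

lemma eTM_two : eTM 2 = -1 := by
  have := eTM_two_mul 1
  rw [mul_one] at this
  rw [this, eTM_one]

lemma S_one_one : S 1 1 = 0 := by
  rw [S, show (2:ℕ) ^ 1 = 2 from rfl, Finset.sum_range_succ, Finset.sum_range_succ,
    Finset.sum_range_zero]
  norm_num [eTM_zero, eTM_one, eTM_two]

lemma mu_map (m : ℕ) : mu ((List.range m).map T) = (List.range (2 * m)).map T := by
  induction m with
  | zero => simp [mu]
  | succ m ih =>
    rw [List.range_succ, List.map_append, show 2 * (m + 1) = 2 * m + 1 + 1 by ring,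
      List.range_succ, List.range_succ, List.map_append, List.map_append]
    unfold mu at *
    rw [List.flatMap_append, ih]
    simp [T_two_mul, T_two_mul_add_one]

lemma tWord_eq (n : ℕ) : tWord n = (List.range (2 ^ n)).map T := by
  induction n with
  | zero =>
    show [0] = List.map T (List.range 1)
    rw [show List.range 1 = [0] from rfl, List.map_singleton, T_zero]
  | succ n ih =>
    rw [tWord, Function.iterate_succ_apply', ← tWord, ih, mu_map, pow_succ, mul_comm]

lemma SD_eval (n i : ℕ) (hi : i ≤ 2 ^ n) :
    SD (tWord n) (((tWord (n + 1)).drop i).take (2 ^ n))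
      = ((2 ^ n : ℝ) + (S n i : ℝ)) / 2 ^ (n + 1) := by
  have hpow : (2:ℕ) ^ (n + 1) = 2 ^ n + 2 ^ n := by rw [pow_succ]; ring
  have hzip : List.zipWith (fun a b => if a = b then (1:ℝ) else 0) (tWord n)
      (((tWord (n + 1)).drop i).take (2 ^ n))
      = List.ofFn (fun j : Fin (2 ^ n) => if T j = T (i + j) then (1:ℝ) else 0) := by
    apply List.ext_getElem
    · simp only [List.length_zipWith, List.length_take, List.length_drop,
        List.length_ofFn, tWord_eq, List.length_map, List.length_range]
      omega
    · intro k h1 h2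
      simp only [tWord_eq, List.getElem_zipWith, List.getElem_take, List.getElem_drop,
        List.getElem_map, List.getElem_range, List.getElem_ofFn]
  have hterm : ∀ j : ℕ, (if T j = T (i + j) then (1:ℝ) else 0)
      = (1 + (eTM j * eTM (i + j) : ℤ)) / 2 := by
    intro j
    rcases Nat.le_one_iff_eq_zero_or_eq_one.mp (T_le_one j) with h | h <;>
    rcases Nat.le_one_iff_eq_zero_or_eq_one.mp (T_le_one (i + j)) with h' | h' <;>
      simp [h, h', eTM_def] <;> norm_num
  have hsum : (List.ofFn (fun j : Fin (2 ^ n) => if T j = T (i + j) then (1:ℝ) else 0)).sum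
      = ((2 ^ n : ℝ) + (S n i : ℝ)) / 2 := by
    rw [List.sum_ofFn, Fin.sum_univ_eq_sum_range (fun m => if T m = T (i + m) then (1:ℝ) else 0)]
    rw [Finset.sum_congr rfl fun j _ => hterm j]
    rw [S]
    push_cast
    rw [← Finset.sum_div, Finset.sum_add_distrib]
    simp
  have hlen : ((tWord n).length : ℝ) = 2 ^ n := by rw [tWord_eq]; simp
  rw [SD, hzip, hsum, hlen, div_div, show (2:ℝ) * 2 ^ n = 2 ^ (n + 1) by rw [pow_succ]; ring]

lemma key : ∀ m : ℕ,
    (∀ i, 1 ≤ i → i < 2 ^ (m + 1) → |S (m + 1) i| ≤ 2 ^ m) ∧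
    S (m + 1) 1 ≤ 0 ∧ 0 ≤ S (m + 1) (2 ^ (m + 1) - 1) ∧ S (m + 1) (2 ^ m) = 0 := by
  intro m
  induction m with
  | zero =>
    refine ⟨fun i h1 h2 => ?_, by rw [S_one_one], by norm_num [S_one_one], by norm_num [S_one_one]⟩
    interval_cases i
    rw [S_one_one]; norm_num
  | succ m ih =>
    obtain ⟨ihb, ih1, ihtop, ihmid⟩ := ih
    have hp : (1 : ℕ) ≤ 2 ^ m := Nat.one_le_two_pow
    have hpZ : (0 : ℤ) < 2 ^ m := by positivity
    have hpow2 : (2 : ℤ) ^ (m + 1) = 2 * 2 ^ m := by rw [pow_succ]; ring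
    have hpow3 : (2 : ℤ) ^ (m + 2) = 4 * 2 ^ m := by rw [pow_succ, pow_succ]; ring
    have hmono : (2 : ℤ) ^ m ≤ 2 ^ (m + 1) := by linarith
    have h2pow : (2:ℕ) ≤ 2 ^ (m + 1) := by
      calc (2:ℕ) = 2 ^ 1 := rfl
        _ ≤ 2 ^ (m + 1) := Nat.pow_le_pow_right (by norm_num) (by omega)
    -- value at index 1
    have h1v : S (m + 2) 1 = -(2 ^ (m + 1) + S (m + 1) 1) := by
      have := S_odd (m + 1) 0
      rw [S_zero] at this
      exact this
    have hb1 : -(2 : ℤ) ^ m ≤ S (m + 1) 1 := by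
      have := ihb 1 le_rfl (by omega)
      rw [abs_le] at this; exact this.1
    -- value at top index
    have htopidx : 2 ^ (m + 2) - 1 = 2 * (2 ^ (m + 1) - 1) + 1 := by
      rw [pow_succ]; omega
    have htv : S (m + 2) (2 ^ (m + 2) - 1) = 2 ^ (m + 1) - S (m + 1) (2 ^ (m + 1) - 1) := by
      rw [htopidx, S_odd]
      have h2 : 2 ^ (m + 1) - 1 + 1 = 2 ^ (m + 1) := by
        have : (1:ℕ) ≤ 2 ^ (m+1) := Nat.one_le_two_pow
        omega
      rw [h2, S_top]
      ring
    have hbt : S (m + 1) (2 ^ (m + 1) - 1) ≤ 2 ^ m := by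
      have := ihb (2 ^ (m + 1) - 1) (by omega) (by omega)
      rw [abs_le] at this; exact this.2
    refine ⟨?_, ?_, ?_, ?_⟩
    · intro i hi1 hi2
      rcases Nat.even_or_odd i with ⟨k, hk⟩ | ⟨k, hk⟩
      · have hk' : i = 2 * k := by omega
        subst hk'
        have hk1 : 1 ≤ k := by omega
        have hk2 : k < 2 ^ (m + 1) := by rw [pow_succ] at hi2; omega
        rw [S_even, abs_mul, abs_two]
        have := ihb k hk1 hk2
        linarith
      · subst hk
        have hk2 : k < 2 ^ (m + 1) := by rw [pow_succ] at hi2; omega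
        rw [S_odd]
        rcases Nat.eq_zero_or_pos k with h0 | h0
        · subst h0
          rw [zero_add, S_zero]
          rw [abs_le]
          constructor <;> linarith [hb1, ih1]
        · rcases eq_or_lt_of_le (Nat.succ_le_of_lt hk2) with he | hlt
          · -- k + 1 = 2 ^ (m+1)
            have hkk : k = 2 ^ (m + 1) - 1 := by omega
            rw [show k + 1 = 2 ^ (m + 1) from he, S_top, hkk]
            have h0' : 0 ≤ S (m + 1) (2 ^ (m + 1) - 1) := ihtop
            rw [abs_le]
            constructor <;> linarith [hbt, ihtop]
          · have b1 := ihb k h0 hk2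
            have b2 := ihb (k + 1) (by omega) hlt
            rw [abs_le] at b1 b2 ⊢
            constructor <;> linarith [b1.1, b1.2, b2.1, b2.2]
    · rw [h1v]
      linarith [hb1]
    · rw [htv]
      linarith [hbt]
    · rw [show (2:ℕ) ^ (m + 1) = 2 * 2 ^ m by rw [pow_succ]; ring, S_even, ihmid, mul_zero]

theorem technical_one_a (n i : ℕ) (h1 : 1 ≤ i) (h2 : i ≤ 2 ^ n - 1) :
    (i = 2 ^ (n - 1) →
      SD (tWord n) (((tWord (n + 1)).drop i).take (2 ^ n)) = 1/2) ∧
    (i ≠ 2 ^ (n - 1) →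
      SD (tWord n) (((tWord (n + 1)).drop i).take (2 ^ n)) ∈ Set.Icc (1/4 : ℝ) (3/4)) := by
  obtain ⟨m, rfl⟩ : ∃ m, n = m + 1 := by
    rcases n with _ | m
    · exfalso; simp at h2; omega
    · exact ⟨m, rfl⟩
  have hin : i < 2 ^ (m + 1) := by
    have : (1:ℕ) ≤ 2 ^ (m + 1) := Nat.one_le_two_pow
    omega
  have hile : i ≤ 2 ^ (m + 1) := le_of_lt hin
  obtain ⟨kb, k1, ktop, kmid⟩ := key m
  have hpos : (0:ℝ) < 2 ^ m := by positivity
  have hc2 : (2:ℝ) ^ (m + 1) = 2 * 2 ^ m := by rw [pow_succ]; ring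
  have hc3 : (2:ℝ) ^ (m + 1 + 1) = 4 * 2 ^ m := by rw [pow_succ, pow_succ]; ring
  rw [SD_eval (m + 1) i hile]
  constructor
  · intro hi
    rw [Nat.add_sub_cancel] at hi
    rw [hi, kmid]
    push_cast
    rw [add_zero, hc2, hc3]
    rw [div_eq_div_iff (by positivity) (by norm_num)]
    ring
  · intro _
    have hb := kb i h1 hin
    rw [abs_le] at hb
    have hb1 : -(2:ℝ) ^ m ≤ (S (m + 1) i : ℝ) := by exact_mod_cast hb.1
    have hb2 : ((S (m + 1) i : ℝ)) ≤ 2 ^ m := by exact_mod_cast hb.2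
    rw [Set.mem_Icc]
    constructor
    · rw [le_div_iff₀ (by positivity)]
      push_cast
      rw [hc2, hc3]
      linarith
    · rw [div_le_iff₀ (by positivity)]
      push_cast
      rw [hc2, hc3]
      linarith
end
end
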